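/- (Weighted 1-D Sobolev bound) For a C¹ function ψ on ℝ compactly supported, and any t ∈ ℝ, one has sup_{x∈ℝ} (1 + (t-|x|)²)^{1/2} ψ(x)² ≲ ∫_ℝ [(1 + (t-|x|)²)(ψ'(x))² + ψ(x)²] dx, with an absolute implicit constant. -/

import Mathlib

open MeasureTheory

open Set Filter in
private lemma weighted_sobolev_aux (ψ : ℝ → ℝ) (hψ : ContDiff ℝ 1 ψ)
    (hc : HasCompactSupport ψ) (t x : ℝ) (hx : 0 ≤ x) :
    Real.sqrt (1 + (t - |x|) ^ 2) * ψ x ^ 2 ≤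
      2 * ∫ y, ((1 + (t - |y|) ^ 2) * (deriv ψ y) ^ 2 + ψ y ^ 2) := by
  set g : ℝ → ℝ := fun y => Real.sqrt (1 + (t - y) ^ 2) with hg_def
  have hw : ∀ y : ℝ, (0:ℝ) ≤ 1 + (t - y) ^ 2 := fun y => by positivity
  have hg1 : ∀ y, (1:ℝ) ≤ g y := by
    intro y
    rw [show (1:ℝ) = Real.sqrt 1 by simp]
    exact Real.sqrt_le_sqrt (by nlinarith [sq_nonneg (t - y)])
  have hgpos : ∀ y, (0:ℝ) < g y := fun y => lt_of_lt_of_le one_pos (hg1 y)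
  have hgsq : ∀ y, g y ^ 2 = 1 + (t - y) ^ 2 := fun y => Real.sq_sqrt (hw y)
  have hψd : Differentiable ℝ ψ := hψ.differentiable one_ne_zero
  have hψ'cont : Continuous (deriv ψ) := hψ.continuous_deriv le_rfl
  set G : ℝ → ℝ := fun y => g y * ψ y ^ 2 with hG_def
  set G' : ℝ → ℝ := fun y => (y - t) / g y * ψ y ^ 2 + g y * (2 * ψ y * deriv ψ y)
    with hG'_def
  have hgcont : Continuous g :=
    Real.continuous_sqrt.comp (by fun_prop)
  have hgd : ∀ y, HasDerivAt g ((y - t) / g y) y := by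
    intro y
    have h1 : HasDerivAt (fun y : ℝ => 1 + (t - y) ^ 2)
        (2 * (t - y) ^ 1 * (0 - 1)) y :=
      (((hasDerivAt_const y t).sub (hasDerivAt_id y)).pow 2).const_add 1
    have h2 := h1.sqrt (by positivity)
    convert h2 using 1
    simp only [hg_def]
    field_simp
    ring
  have hGd : ∀ y, HasDerivAt G (G' y) y := by
    intro y
    have hp : HasDerivAt (fun y => ψ y ^ 2) (2 * ψ y ^ 1 * deriv ψ y) y :=
      ((hψd y).hasDerivAt).pow 2
    have : HasDerivAt (fun y => g y * ψ y ^ 2) _ y := (hgd y).mul hp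
    convert this using 1
    simp only [hG'_def]
    ring
  -- integrability data
  have hG'cont : Continuous G' := by
    apply Continuous.add
    · exact ((continuous_id.sub continuous_const).div hgcont
        (fun y => (hgpos y).ne')).mul ((hψ.continuous).pow 2)
    · exact hgcont.mul (by fun_prop)
  have hG'supp : HasCompactSupport G' := by
    apply hc.mono'
    intro y hy
    apply subset_tsupport
    intro h0
    apply hy
    simp [hG'_def, h0]
  have hG'int : Integrable G' := hG'cont.integrable_of_hasCompactSupport hG'supp
  -- tendsto 0 at top
  obtain ⟨R, hR⟩ := hc.isBounded.subset_closedBall 0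
  have hGtop : Tendsto G atTop (nhds 0) := by
    apply tendsto_const_nhds.congr'
    filter_upwards [eventually_gt_atTop R] with y hy
    have hy0 : ψ y = 0 := by
      apply image_eq_zero_of_notMem_tsupport
      intro hmem
      have := hR hmem
      simp [Metric.mem_closedBall, Real.dist_eq, abs_le] at this
      linarith
    simp [hG_def, hy0]
  have key : ∫ y in Ioi x, G' y = 0 - G x :=
    integral_Ioi_of_hasDerivAt_of_tendsto
      ((hGd x).continuousAt.continuousWithinAt)
      (fun y _ => hGd y) hG'int.integrableOn hGtop
  -- pointwise bound B
  set B : ℝ → ℝ := fun y => 2 * ψ y ^ 2 + (1 + (t - |y|) ^ 2) * (deriv ψ y) ^ 2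
    with hB_def
  have hBcont : Continuous B := by
    apply Continuous.add
    · fun_prop
    · exact (by fun_prop : Continuous fun y : ℝ => 1 + (t - |y|) ^ 2).mul
        (hψ'cont.pow 2)
  have h1supp : HasCompactSupport (fun y => 2 * ψ y ^ 2) := by
    apply hc.mono
    intro y hy
    simp only [Function.mem_support] at hy ⊢
    intro h0
    apply hy
    simp [h0]
  have h2supp : HasCompactSupport
      (fun y => (1 + (t - |y|) ^ 2) * (deriv ψ y) ^ 2) := by
    apply hc.deriv.mono
    intro y hy
    simp only [Function.mem_support] at hy ⊢
    intro h0
    apply hy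
    simp [h0]
  have hBsupp : HasCompactSupport B := h1supp.add h2supp
  have hBint : Integrable B := hBcont.integrable_of_hasCompactSupport hBsupp
  have hBnonneg : ∀ y, 0 ≤ B y := fun y => by positivity
  -- |G' y| ≤ B y for y in Ioi x
  have hbound : ∀ y ∈ Ioi x, |G' y| ≤ B y := by
    intro y hy
    have hyx : (0:ℝ) < y := lt_of_le_of_lt hx hy
    have habs : |y| = y := abs_of_pos hyx
    have h1 : |y - t| ≤ g y := by
      rw [← Real.sqrt_sq_eq_abs]
      exact Real.sqrt_le_sqrt (by nlinarith [sq_nonneg (y - t)])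
    have h2 : |(y - t) / g y| ≤ 1 := by
      rw [abs_div, abs_of_pos (hgpos y)]
      exact div_le_one_of_le₀ h1 (hgpos y).le
    calc |G' y| ≤ |(y - t) / g y * ψ y ^ 2| + |g y * (2 * ψ y * deriv ψ y)| :=
          abs_add_le _ _
      _ ≤ ψ y ^ 2 + (ψ y ^ 2 + g y ^ 2 * (deriv ψ y) ^ 2) := by
          gcongr ?_ + ?_
          · rw [abs_mul, abs_of_nonneg (sq_nonneg (ψ y))]
            exact mul_le_of_le_one_left (sq_nonneg _) h2
          · rw [abs_mul, abs_of_pos (hgpos y)]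
            have heq : g y * |2 * ψ y * deriv ψ y|
                = 2 * |ψ y| * (g y * |deriv ψ y|) := by
              rw [abs_mul, abs_mul]
              rw [abs_of_nonneg (by norm_num : (0:ℝ) ≤ 2)]
              ring
            rw [heq]
            nlinarith [sq_nonneg (|ψ y| - g y * |deriv ψ y|), abs_nonneg (ψ y),
              abs_nonneg (deriv ψ y), sq_abs (ψ y), sq_abs (deriv ψ y),
              (hgpos y).le]
      _ = B y := by rw [hB_def]; simp only; rw [hgsq y, habs]; ring
  -- main chain
  have hGx : G x ≤ ∫ y in Ioi x, B y := by
    have hGeq : G x = -∫ y in Ioi x, G' y := by rw [key]; ring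
    rw [hGeq]
    calc -∫ y in Ioi x, G' y ≤ |∫ y in Ioi x, G' y| := neg_le_abs _
      _ ≤ ∫ y in Ioi x, |G' y| := by
          simpa [Real.norm_eq_abs] using
            norm_integral_le_integral_norm (μ := volume.restrict (Ioi x)) G'
      _ ≤ ∫ y in Ioi x, B y := by
          apply setIntegral_mono_on hG'int.abs.integrableOn hBint.integrableOn
            measurableSet_Ioi
          intro y hy
          exact hbound y hy
  have hIci : ∫ y in Ioi x, B y ≤ ∫ y, B y :=
    setIntegral_le_integral hBint (Eventually.of_forall hBnonneg)
  have hfin : ∫ y, B y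
      ≤ 2 * ∫ y, ((1 + (t - |y|) ^ 2) * (deriv ψ y) ^ 2 + ψ y ^ 2) := by
    have hψsq : Integrable (fun y => ψ y ^ 2) := by
      apply (hψ.continuous.pow 2).integrable_of_hasCompactSupport
      apply hc.mono
      intro y hy
      simp only [Function.mem_support] at hy ⊢
      intro h0
      apply hy
      simp [h0]
    have h2cont : Continuous (fun y : ℝ => (1 + (t - |y|) ^ 2) * (deriv ψ y) ^ 2) :=
      (by fun_prop : Continuous fun y : ℝ => 1 + (t - |y|) ^ 2).mul (hψ'cont.pow 2)
    have hHint : Integrable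
        (fun y => (1 + (t - |y|) ^ 2) * (deriv ψ y) ^ 2 + ψ y ^ 2) :=
      (h2cont.integrable_of_hasCompactSupport h2supp).add hψsq
    rw [← integral_const_mul]
    apply integral_mono hBint (hHint.const_mul 2)
    intro y
    simp only [hB_def]
    nlinarith [sq_nonneg (deriv ψ y), sq_nonneg (t - |y|), sq_nonneg (ψ y)]
  calc Real.sqrt (1 + (t - |x|) ^ 2) * ψ x ^ 2 = G x := by
        rw [hG_def]; simp only; rw [abs_of_nonneg hx]
    _ ≤ ∫ y in Ioi x, B y := hGx
    _ ≤ ∫ y, B y := hIci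
    _ ≤ _ := hfin

/-- Weighted 1-D Sobolev bound: for `ψ ∈ C_c¹(ℝ)` and any `t`,
`sup_x (1+(t-|x|)²)^{1/2} ψ(x)² ≲ ∫ (1+(t-|x|)²)(ψ')² + ψ² dx`
with an absolute constant. -/
theorem weighted_sobolev_1d :
    ∃ C : ℝ, 0 < C ∧ ∀ ψ : ℝ → ℝ, ContDiff ℝ 1 ψ → HasCompactSupport ψ →
      ∀ t x : ℝ,
      Real.sqrt (1 + (t - |x|) ^ 2) * ψ x ^ 2 ≤
        C * ∫ y, ((1 + (t - |y|) ^ 2) * (deriv ψ y) ^ 2 + ψ y ^ 2) := by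
  refine ⟨2, two_pos, fun ψ hψ hc t x => ?_⟩
  rcases le_or_gt 0 x with hx | hx
  · exact weighted_sobolev_aux ψ hψ hc t x hx
  · set φ : ℝ → ℝ := fun y => ψ (-y) with hφ_def
    have hφ : ContDiff ℝ 1 φ := hψ.comp contDiff_neg
    have hφc : HasCompactSupport φ := hc.comp_homeomorph (Homeomorph.neg ℝ)
    have h := weighted_sobolev_aux φ hφ hφc t (-x) (by linarith)
    have hder : ∀ y, deriv φ y = -deriv ψ (-y) := fun y => deriv_comp_neg ψ y
    have hInt : (∫ y, ((1 + (t - |y|) ^ 2) * (deriv φ y) ^ 2 + φ y ^ 2))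
        = ∫ y, ((1 + (t - |y|) ^ 2) * (deriv ψ y) ^ 2 + ψ y ^ 2) := by
      rw [show (fun y => (1 + (t - |y|) ^ 2) * (deriv φ y) ^ 2 + φ y ^ 2)
          = fun y => (1 + (t - |(-y)|) ^ 2) * (deriv ψ (-y)) ^ 2 + ψ (-y) ^ 2 by
        funext y; rw [hder y]; simp [hφ_def]]
      exact integral_neg_eq_self
        (fun y => (1 + (t - |y|) ^ 2) * (deriv ψ y) ^ 2 + ψ y ^ 2) volume
    rw [← hInt]
    simpa [hφ_def, abs_neg] using h
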